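/- For every graph G with n vertices, the sparse twin-width, maximum degree, and twin-width satisfy max{tww(G), Δ(G)} ≤ stww(G) ≤ tww(G) + Δ(G). -/

import Mathlib

noncomputable section

namespace TwwPaper

open Finset

variable {V : Type*}

/-- The number of edges of `G` with both endpoints in `X`. -/
def edgesIn (G : SimpleGraph V) (X : Finset V) : ℕ :=
  Nat.card {e : Sym2 V // e ∈ G.edgeSet ∧ ∀ v ∈ e, v ∈ X}

/-- The number of edges of `G`. -/
def edgeCount (G : SimpleGraph V) : ℕ := Nat.card G.edgeSet

/-- The maximum average degree of `G`: the maximum over nonempty vertex subsets `X`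
of `2 e(G[X]) / |X|`. -/
def mad [Fintype V] (G : SimpleGraph V) : ℝ :=
  ⨆ X : {X : Finset V // X.Nonempty}, (2 * edgesIn G X.1 : ℝ) / X.1.card

/-- The degree of a vertex. -/
def deg (G : SimpleGraph V) (v : V) : ℕ := Nat.card (G.neighborSet v)

/-- The maximum degree `Δ(G)`. -/
def maxDeg [Fintype V] (G : SimpleGraph V) : ℕ := univ.sup (deg G)

/-- `G` is `d`-regular. -/
def IsReg (G : SimpleGraph V) (d : ℕ) : Prop := ∀ v, deg G v = d

/-- `G` admits an orientation with maximum outdegree at most one: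
an assignment of a tail (source) vertex to each edge, no vertex being
the tail of two distinct edges. -/
def HasOrientationOutdegLEOne (G : SimpleGraph V) : Prop :=
  ∃ f : G.edgeSet → V, (∀ e : G.edgeSet, f e ∈ (e : Sym2 V)) ∧ Function.Injective f

/-- Two lists (sequences) of the same length `r` are close if they contain a common
subsequence of length `r - 1`, obtained by deleting one entry from each. -/
def Close {S : Type*} (L M : List S) : Prop :=
  ∃ i < L.length, ∃ j < M.length, L.eraseIdx i = M.eraseIdx j

section Partitions

variable [Fintype V] [DecidableEq V]

/-- `Q` is obtained from `P` by merging the two distinct parts `A` and `B`. -/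
def IsMergeStep (P Q : Finpartition (univ : Finset V)) : Prop :=
  ∃ A ∈ P.parts, ∃ B ∈ P.parts, A ≠ B ∧
    Q.parts = insert (A ∪ B) ((P.parts.erase A).erase B)

/-- Degree of the part `A` in the quotient graph `G / P`. -/
def quotDeg (G : SimpleGraph V) (P : Finpartition (univ : Finset V)) (A : Finset V) : ℕ :=
  Nat.card {B : Finset V // B ∈ P.parts ∧ B ≠ A ∧ ∃ u ∈ A, ∃ v ∈ B, G.Adj u v}

/-- Red degree of the part `A` with respect to the partition `P`: the number of other
parts `B` which are neither fully adjacent nor fully non-adjacent to `A`. -/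
def redDeg (G : SimpleGraph V) (P : Finpartition (univ : Finset V)) (A : Finset V) : ℕ :=
  Nat.card {B : Finset V // B ∈ P.parts ∧ B ≠ A ∧ (∃ u ∈ A, ∃ v ∈ B, G.Adj u v) ∧
    ¬ (∀ u ∈ A, ∀ v ∈ B, G.Adj u v)}

/-- There is a sequence of partitions of `V(G)`, starting at the discrete partition,
ending with at most one part, each obtained from the previous one by merging two parts,
such that every part of every intermediate partition has `degFn`-degree at most `w`. -/
def SeqOK (G : SimpleGraph V)
    (degFn : SimpleGraph V → Finpartition (univ : Finset V) → Finset V → ℕ) (w : ℕ) : Prop :=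
  ∃ n : ℕ, ∃ P : Fin (n + 1) → Finpartition (univ : Finset V),
    (∀ A ∈ (P 0).parts, A.card = 1) ∧
    (P (Fin.last n)).parts.card ≤ 1 ∧
    (∀ i : Fin n, IsMergeStep (P i.castSucc) (P i.succ)) ∧
    (∀ i, ∀ A ∈ (P i).parts, degFn G (P i) A ≤ w)

/-- The sparse twin-width of `G`: the least `w` such that `G` can be contracted to a
single vertex by iterated pairwise identifications with all intermediate (quotient)
graphs of maximum degree at most `w`. -/
def stww (G : SimpleGraph V) : ℕ := sInf {w | SeqOK G quotDeg w}

/-- The twin-width of `G`, via contraction sequences minimizing the maximum red degree. -/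
def tww (G : SimpleGraph V) : ℕ := sInf {w | SeqOK G redDeg w}

/-- The quotient graph `G / P`: parts of `P` are adjacent iff some edge of `G` joins them. -/
def quotGraph (G : SimpleGraph V) (P : Finpartition (univ : Finset V)) :
    SimpleGraph {A : Finset V // A ∈ P.parts} :=
  SimpleGraph.fromRel (fun A B => ∃ u ∈ A.1, ∃ v ∈ B.1, G.Adj u v)

end Partitions

/-- A graph is `w`-degenerate if every nonempty (induced) subgraph has a vertex of
degree at most `w` in it. -/
def Degenerate {W : Type*} (w : ℕ) (H : SimpleGraph W) : Prop :=
  ∀ s : Finset W, s.Nonempty → ∃ a ∈ s, Nat.card {b : W // b ∈ s ∧ H.Adj a b} ≤ w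

/-- The graph `Π(r₁,…,r_a; b, q)`: vertices are tuples `(v₁,…,v_a)` with `vᵢ ∈ [q]^{rᵢ}`,
two tuples being adjacent iff (they are distinct and) at least `b` coordinates are
pairwise equal or close. -/
def PiGraph (a b q : ℕ) (rfn : Fin a → ℕ) : SimpleGraph (∀ i : Fin a, Fin (rfn i) → Fin q) :=
  SimpleGraph.fromRel (fun u v => ∃ I : Finset (Fin a), I.card = b ∧
    ∀ i ∈ I, u i = v i ∨ Close (List.ofFn (u i)) (List.ofFn (v i)))

section AuxLemmas

variable {V : Type*} [Fintype V] [DecidableEq V]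

set_option linter.unusedSectionVars false

def mergeP (P : Finpartition (univ : Finset V)) (A B : Finset V)
    (hA : A ∈ P.parts) (hB : B ∈ P.parts) (hAB : A ≠ B) :
    Finpartition (univ : Finset V) where
  parts := insert (A ∪ B) ((P.parts.erase A).erase B)
  supIndep := by
    rw [Finset.supIndep_iff_pairwiseDisjoint, coe_insert]
    refine Set.PairwiseDisjoint.insert ?_ ?_
    · exact P.supIndep.pairwiseDisjoint.subset (by
        intro x hx
        simp only [Finset.coe_erase, Set.mem_diff] at hx
        exact hx.1.1)
    · intro C hC _
      simp only [Finset.coe_erase, Set.mem_diff, Set.mem_singleton_iff, Finset.mem_coe] at hC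
      obtain ⟨⟨hCp, hCA⟩, hCB⟩ := hC
      have h1 : Disjoint A C := P.disjoint hA hCp (fun h => hCA h.symm)
      have h2 : Disjoint B C := P.disjoint hB hCp (fun h => hCB h.symm)
      exact Finset.disjoint_union_left.2 ⟨h1, h2⟩
  sup_parts := by
    have h1 : B ∈ P.parts.erase A := Finset.mem_erase.2 ⟨fun h => hAB h.symm, hB⟩
    have h2 : insert B ((P.parts.erase A).erase B) = P.parts.erase A :=
      Finset.insert_erase h1
    have h3 : insert A (P.parts.erase A) = P.parts := Finset.insert_erase hA
    calc (insert (A ∪ B) ((P.parts.erase A).erase B)).sup id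
        = (A ∪ B) ⊔ ((P.parts.erase A).erase B).sup id := by
          rw [Finset.sup_insert, id_eq]
      _ = A ⊔ (B ⊔ ((P.parts.erase A).erase B).sup id) := by
          rw [show A ∪ B = A ⊔ B from rfl, sup_assoc]
      _ = A ⊔ (insert B ((P.parts.erase A).erase B)).sup id := by
          rw [Finset.sup_insert, id_eq]
      _ = (insert A (P.parts.erase A)).sup id := by
          rw [h2, Finset.sup_insert, id_eq]
      _ = P.parts.sup id := by rw [h3]
      _ = univ := P.sup_parts
  bot_notMem := by
    intro h
    rcases Finset.mem_insert.1 h with h | h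
    · have hne : (A ∪ B).Nonempty := (P.nonempty_of_mem_parts hA).mono Finset.subset_union_left
      rw [← h] at hne
      exact hne.ne_empty rfl
    · exact P.bot_notMem (Finset.mem_of_mem_erase (Finset.mem_of_mem_erase h))

lemma mergeP_card_lt (P : Finpartition (univ : Finset V)) (A B : Finset V)
    (hA : A ∈ P.parts) (hB : B ∈ P.parts) (hAB : A ≠ B) :
    (mergeP P A B hA hB hAB).parts.card < P.parts.card := by
  have h1 : B ∈ P.parts.erase A := Finset.mem_erase.2 ⟨fun h => hAB h.symm, hB⟩
  have hc2 : ((P.parts.erase A).erase B).card = P.parts.card - 2 := by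
    rw [Finset.card_erase_of_mem h1, Finset.card_erase_of_mem hA]
    omega
  have h2le : 2 ≤ P.parts.card := by
    have := Finset.one_lt_card.2 ⟨A, hA, B, hB, hAB⟩
    omega
  have := Finset.card_insert_le (A ∪ B) ((P.parts.erase A).erase B)
  show (insert (A ∪ B) ((P.parts.erase A).erase B)).card < P.parts.card
  omega

lemma seqFromNat : ∀ k : ℕ, ∀ P : Finpartition (univ : Finset V), P.parts.card ≤ k →
    ∃ n : ℕ, ∃ Q : ℕ → Finpartition (univ : Finset V),
      Q 0 = P ∧ (Q n).parts.card ≤ 1 ∧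
      (∀ i < n, IsMergeStep (Q i) (Q (i + 1))) := by
  intro k
  induction k with
  | zero =>
    intro P hP
    exact ⟨0, fun _ => P, rfl, hP.trans (by omega), fun i hi => absurd hi (by omega)⟩
  | succ k ih =>
    intro P hP
    by_cases h1 : P.parts.card ≤ 1
    · exact ⟨0, fun _ => P, rfl, h1, by omega⟩
    · have hcard : 1 < P.parts.card := by omega
      obtain ⟨A, hA, B, hB, hAB⟩ := Finset.one_lt_card.1 hcard
      have hlt := mergeP_card_lt P A B hA hB hAB
      have hMk : (mergeP P A B hA hB hAB).parts.card ≤ k := by omega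
      obtain ⟨n, Q, hQ0, hQn, hQstep⟩ := ih (mergeP P A B hA hB hAB) hMk
      refine ⟨n + 1, fun i => match i with | 0 => P | j + 1 => Q j, rfl, hQn, ?_⟩
      intro i hi
      rcases i with _ | j
      · refine ⟨A, hA, B, hB, hAB, ?_⟩
        show (Q 0).parts = _
        rw [hQ0]
        rfl
      · exact hQstep j (by omega)

lemma nat_card_subtype_mono {p q : Finset V → Prop} (h : ∀ B, p B → q B) :
    Nat.card {B : Finset V // p B} ≤ Nat.card {B : Finset V // q B} :=
  Nat.card_le_card_of_injective (fun x => ⟨x.1, h x.1 x.2⟩) (by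
    intro a b hh
    have h2 : a.1 = b.1 := Subtype.mk_eq_mk.1 hh
    exact Subtype.ext h2)

lemma redDeg_le_quotDeg (G : SimpleGraph V) (P : Finpartition (univ : Finset V))
    (A : Finset V) : redDeg G P A ≤ quotDeg G P A :=
  nat_card_subtype_mono (fun B hB => ⟨hB.1, hB.2.1, hB.2.2.1⟩)

lemma quotDeg_le_card (G : SimpleGraph V) (P : Finpartition (univ : Finset V))
    (A : Finset V) : quotDeg G P A ≤ Fintype.card V := by
  have h1 : quotDeg G P A ≤ Nat.card {B : Finset V // B ∈ P.parts} :=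
    nat_card_subtype_mono (fun B hB => hB.1)
  have h2 : Nat.card {B : Finset V // B ∈ P.parts} = P.parts.card := by
    rw [Nat.card_eq_fintype_card, Fintype.card_coe]
  have h3 := P.card_parts_le_card
  rw [Finset.card_univ] at h3
  omega

lemma deg_le_of_singletons (G : SimpleGraph V) (P : Finpartition (univ : Finset V))
    (h0 : ∀ A ∈ P.parts, A.card = 1) {w : ℕ}
    (hd : ∀ A ∈ P.parts, quotDeg G P A ≤ w) (v : V) : deg G v ≤ w := by
  have hpart : ∀ x : V, P.part x = {x} := by
    intro x
    obtain ⟨a, ha⟩ := Finset.card_eq_one.1 (h0 _ (P.part_mem.2 (mem_univ x)))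
    have hx := P.mem_part (mem_univ x)
    rw [ha] at hx ⊢
    rw [Finset.mem_singleton.1 hx]
  have hvmem : ({v} : Finset V) ∈ P.parts := hpart v ▸ P.part_mem.2 (mem_univ v)
  have hle : deg G v ≤ quotDeg G P {v} := by
    refine Nat.card_le_card_of_injective
      (fun u => ⟨{u.1}, hpart u.1 ▸ P.part_mem.2 (mem_univ u.1),
        fun h => (G.ne_of_adj u.2).symm (Finset.singleton_injective h),
        v, Finset.mem_singleton_self v, u.1, Finset.mem_singleton_self u.1, u.2⟩) ?_
    intro a b hab
    exact Subtype.ext (Finset.singleton_injective (congrArg Subtype.val hab))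
  exact hle.trans (hd _ hvmem)

lemma quotDeg_le_redDeg_add (G : SimpleGraph V) (P : Finpartition (univ : Finset V))
    (A : Finset V) (hA : A ∈ P.parts) : quotDeg G P A ≤ redDeg G P A + maxDeg G := by
  classical
  obtain ⟨u, hu⟩ := P.nonempty_of_mem_parts hA
  set f : {B : Finset V // B ∈ P.parts ∧ B ≠ A ∧ ∃ x ∈ A, ∃ y ∈ B, G.Adj x y} →
      ({B : Finset V // B ∈ P.parts ∧ B ≠ A ∧ (∃ x ∈ A, ∃ y ∈ B, G.Adj x y) ∧
        ¬ (∀ x ∈ A, ∀ y ∈ B, G.Adj x y)} ⊕ (G.neighborSet u)) :=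
    fun x => if h : ∀ a ∈ A, ∀ y ∈ x.1, G.Adj a y
      then Sum.inr ⟨(P.nonempty_of_mem_parts x.2.1).choose,
        h u hu _ (P.nonempty_of_mem_parts x.2.1).choose_spec⟩
      else Sum.inl ⟨x.1, x.2.1, x.2.2.1, x.2.2.2, h⟩
    with hf
  have hinj : Function.Injective f := by
    intro x y hxy
    by_cases hx : ∀ a ∈ A, ∀ z ∈ x.1, G.Adj a z <;>
      by_cases hy : ∀ a ∈ A, ∀ z ∈ y.1, G.Adj a z
    · simp only [hf, dif_pos hx, dif_pos hy, Sum.inr.injEq, Subtype.mk.injEq] at hxy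
      refine Subtype.ext (P.eq_of_mem_parts x.2.1 y.2.1
        (P.nonempty_of_mem_parts x.2.1).choose_spec ?_)
      have hxy2 := congrArg Subtype.val hxy
      exact (congrArg (· ∈ (y.1 : Finset V)) hxy2).mpr (P.nonempty_of_mem_parts y.2.1).choose_spec
    · simp only [hf, dif_pos hx, dif_neg hy] at hxy; cases hxy
    · simp only [hf, dif_neg hx, dif_pos hy] at hxy; cases hxy
    · simp only [hf, dif_neg hx, dif_neg hy, Sum.inl.injEq, Subtype.mk.injEq] at hxy
      exact Subtype.ext hxy
  have h1 : quotDeg G P A ≤ Nat.card ({B : Finset V // B ∈ P.parts ∧ B ≠ A ∧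
      (∃ x ∈ A, ∃ y ∈ B, G.Adj x y) ∧ ¬ (∀ x ∈ A, ∀ y ∈ B, G.Adj x y)} ⊕ (G.neighborSet u)) :=
    Nat.card_le_card_of_injective f hinj
  rw [Nat.card_sum] at h1
  have h2 : deg G u ≤ maxDeg G := Finset.le_sup (mem_univ u)
  have h3 : Nat.card (G.neighborSet u) = deg G u := rfl
  have h4 : redDeg G P A = Nat.card {B : Finset V // B ∈ P.parts ∧ B ≠ A ∧
      (∃ x ∈ A, ∃ y ∈ B, G.Adj x y) ∧ ¬ (∀ x ∈ A, ∀ y ∈ B, G.Adj x y)} := rfl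
  omega

lemma seqOK_quot (G : SimpleGraph V) : SeqOK G quotDeg (Fintype.card V) := by
  obtain ⟨n, Q, hQ0, hQn, hstep⟩ :=
    seqFromNat (⊥ : Finpartition (univ : Finset V)).parts.card ⊥ le_rfl
  refine ⟨n, fun i => Q i.val, ?_, ?_, ?_, ?_⟩
  · intro A hA
    have : A ∈ (Q 0).parts := hA
    rw [hQ0, Finpartition.mem_bot_iff] at this
    obtain ⟨a, _, rfl⟩ := this
    exact Finset.card_singleton a
  · show (Q (Fin.last n).val).parts.card ≤ 1
    rw [Fin.val_last]
    exact hQn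
  · intro i
    exact hstep i.val i.isLt
  · intro i A _
    exact quotDeg_le_card G _ A

end AuxLemmas

theorem statement_9 {V : Type*} [Fintype V] [DecidableEq V] (G : SimpleGraph V) :
    max (tww G) (maxDeg G) ≤ stww G ∧ stww G ≤ tww G + maxDeg G := by
  have hmono : ∀ w, SeqOK G quotDeg w → SeqOK G redDeg w := by
    rintro w ⟨n, P, h0, hl, hs, hd⟩
    exact ⟨n, P, h0, hl, hs, fun i A hA => (redDeg_le_quotDeg G _ A).trans (hd i A hA)⟩
  have hQne : {w | SeqOK G quotDeg w}.Nonempty := ⟨_, seqOK_quot G⟩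
  have hRne : {w | SeqOK G redDeg w}.Nonempty := ⟨_, hmono _ (seqOK_quot G)⟩
  have hstwwmem : SeqOK G quotDeg (stww G) := Nat.sInf_mem hQne
  have htwwmem : SeqOK G redDeg (tww G) := Nat.sInf_mem hRne
  refine ⟨max_le ?_ ?_, ?_⟩
  · exact Nat.sInf_le (hmono _ hstwwmem)
  · obtain ⟨n, P, h0, hl, hs, hd⟩ := hstwwmem
    exact Finset.sup_le fun v _ => deg_le_of_singletons G (P 0) h0 (hd 0) v
  · obtain ⟨n, P, h0, hl, hs, hd⟩ := htwwmem
    refine Nat.sInf_le ⟨n, P, h0, hl, hs, fun i A hA => ?_⟩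
    have h1 := quotDeg_le_redDeg_add G (P i) A hA
    have h2 := hd i A hA
    omega


end TwwPaper
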